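/- arXiv:1703.04811 — 3 statements merged into one kernel-verified Lean document; each statement's English description precedes it below -/
import Mathlib

section
/- Let Λ ⊆ ℝ^d be a repetitive Delone set of finite local complexity, let V : ℝ^d → ℝ be a bounded C³ Λ-equivariant non-degenerate function, and let (𝒮, (H_B)) be an interaction satisfying condition (H2). Then for every linear map L : ℝ^r → ℝ^d and every R > 0 there exist λ₀ > 0 and ε > 0 such that for every λ > λ₀ and every map a : ℤ^r → ℝ^d with a i ∈ Z_V and ‖a i - L i‖ ≤ R for all i ∈ ℤ^r, there exists a unique configuration u : ℤ^r → ℝ^d with sup_{i ∈ ℤ^r} ‖u i - a i‖ ≤ ε satisfying the equilibrium equations Q_i(u) + λ ∇V(u i) = 0 for all i ∈ ℤ^r; moreover this u is of type σ, i.e. sup_{i ∈ ℤ^r} ‖u i - L i‖ < ∞. -/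
set_option maxHeartbeats 1000000
set_option synthInstance.maxHeartbeats 1000000


open Metric Set

noncomputable section

abbrev Euc (d : ℕ) : Type := EuclideanSpace ℝ (Fin d)

/-- The translate `Λ - y` of a point set. -/
def translateSet {d : ℕ} (Λ : Set (Euc d)) (y : Euc d) : Set (Euc d) :=
  (fun x => x - y) '' Λ

/-- A Delone set: uniformly discrete and relatively dense. -/
def IsDeloneSet {d : ℕ} (Λ : Set (Euc d)) : Prop :=
  (∃ r > 0, ∀ x ∈ Λ, ∀ y ∈ Λ, x ≠ y → r ≤ dist x y) ∧
  (∃ R > 0, ∀ y : Euc d, ∃ x ∈ Λ, x ∈ closedBall y R)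

/-- Finite local complexity. -/
def HasFLC {d : ℕ} (Λ : Set (Euc d)) : Prop :=
  ∀ R > 0, {s : Set (Euc d) | ∃ y : Euc d, s = translateSet Λ y ∩ closedBall 0 R}.Finite

/-- Repetitivity. -/
def IsRepetitive {d : ℕ} (Λ : Set (Euc d)) : Prop :=
  ∀ C : Set (Euc d), C ⊆ Λ → C.Finite →
    ∃ R > 0, ∀ y : Euc d, ∃ t : Euc d,
      (fun x => x + t) '' C ⊆ Λ ∧ (fun x => x + t) '' C ⊆ closedBall y R

/-- Λ-equivariant (pattern-equivariant) function. -/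
def IsPatternEquivariant {d : ℕ} (Λ : Set (Euc d)) (f : Euc d → ℝ) : Prop :=
  Continuous f ∧ ∃ R₀ > 0, ∀ x y : Euc d,
    translateSet Λ x ∩ closedBall 0 R₀ = translateSet Λ y ∩ closedBall 0 R₀ → f x = f y

/-- The Hessian of `V` at `x`, as the derivative of the gradient. -/
def Hess {d : ℕ} (V : Euc d → ℝ) (x : Euc d) : Euc d →L[ℝ] Euc d :=
  fderiv ℝ (gradient V) x

/-- The set of non-degenerate critical points of `V`. -/
def ZSet {d : ℕ} (V : Euc d → ℝ) : Set (Euc d) :=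
  {x | gradient V x = 0 ∧ IsUnit (Hess V x)}

/-- Non-degenerate potential: some point has vanishing gradient and invertible Hessian. -/
def NonDegeneratePotential {d : ℕ} (V : Euc d → ℝ) : Prop :=
  ∃ z : Euc d, gradient V z = 0 ∧ IsUnit (Hess V z)

/-- Bounded and C³. -/
def BoundedC3 {d : ℕ} (V : Euc d → ℝ) : Prop :=
  ContDiff ℝ 3 V ∧ ∃ M : ℝ, ∀ x, |V x| ≤ M

/-- Relatively dense subset of ℝ^d. -/
def RelativelyDense {d : ℕ} (S : Set (Euc d)) : Prop :=
  ∃ R > 0, ∀ y : Euc d, ∃ x ∈ S, x ∈ closedBall y R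

/-- An expanding linear automorphism with constant μ. -/
def Expanding {d : ℕ} (A : Euc d ≃L[ℝ] Euc d) (μ : ℝ) : Prop :=
  1 < μ ∧ ∀ x : Euc d, μ * ‖x‖ ≤ ‖A x‖

abbrev ZLat (r : ℕ) : Type := Fin r → ℤ

/-- The canonical embedding ℤ^r → ℝ^r. -/
def latCast {r : ℕ} (i : ZLat r) : EuclideanSpace ℝ (Fin r) :=
  WithLp.toLp 2 (fun k => (i k : ℝ))

abbrev Config (r d : ℕ) : Type := ZLat r → Euc d

/-- A configuration is of type σ(R) for the linear map L. -/
def OfTypeR {r d : ℕ} (L : EuclideanSpace ℝ (Fin r) →ₗ[ℝ] Euc d) (R : ℝ)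
    (u : Config r d) : Prop :=
  ∀ i : ZLat r, ‖u i - L (latCast i)‖ ≤ R

/-- An interaction: a collection of finite subsets of ℤ^r of cardinality ≥ 2, each index
lying in only finitely many of them, together with local functions H_B. -/
structure Interaction (r d : ℕ) where
  S : Set (Finset (ZLat r))
  card_ge : ∀ B ∈ S, 2 ≤ B.card
  locFin : ∀ i : ZLat r, {B | B ∈ S ∧ i ∈ B}.Finite
  H : Finset (ZLat r) → Config r d → ℝ
  local_dep : ∀ B ∈ S, ∀ u v : Config r d, (∀ j ∈ B, u j = v j) → H B u = H B v

namespace Interaction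

variable {r d : ℕ} (I : Interaction r d)

/-- The finite collection of interaction sets containing `i`. -/
def Si (i : ZLat r) : Finset (Finset (ZLat r)) := (I.locFin i).toFinset

/-- F_i(u) = Σ_{B ∈ 𝒮, i ∈ B} H_B(u). -/
def F (i : ZLat r) (u : Config r d) : ℝ := ∑ B ∈ I.Si i, I.H B u

/-- Q_i(u): the gradient of F_i with respect to the variable u_i. -/
def Q (i : ZLat r) (u : Config r d) : Euc d :=
  gradient (fun x => I.F i (Function.update u i x)) (u i)

/-- The finite set of indices that F_i depends on. -/
def J (i : ZLat r) : Finset (ZLat r) := (I.Si i).biUnion id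

/-- Patch a configuration using local data on `J i`. -/
def patch (i : ZLat r) (u : Config r d) (w : {j // j ∈ I.J i} → Euc d) : Config r d :=
  fun j => if h : j ∈ I.J i then w ⟨j, h⟩ else u j

/-- Restriction of a configuration to the finitely many variables `J i`. -/
def restr (i : ZLat r) (u : Config r d) : {j // j ∈ I.J i} → Euc d := fun j => u j.1

/-- F_i as a function of its finitely many variables. -/
def locF (i : ZLat r) (u : Config r d) : ({j // j ∈ I.J i} → Euc d) → ℝ :=
  fun w => I.F i (I.patch i u w)

/-- The full Hessian of F_i at u, in the finitely many variables `(u_j)_{j ∈ J i}`. -/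
def HessF (i : ZLat r) (u : Config r d) :
    ({j // j ∈ I.J i} → Euc d) →L[ℝ] ({j // j ∈ I.J i} → Euc d) →L[ℝ] ℝ :=
  fderiv ℝ (fderiv ℝ (I.locF i u)) (I.restr i u)

/-- Each F_i is C² in its finitely many variables. -/
def IsC2 : Prop := ∀ (i : ZLat r) (u : Config r d), ContDiff ℝ 2 (I.locF i u)

/-- Condition (H2). -/
def SatisfiesH2 : Prop :=
  ∀ (L : EuclideanSpace ℝ (Fin r) →ₗ[ℝ] Euc d) (R : ℝ), 0 < R →
    ∃ C : ℝ, ∀ u : Config r d, OfTypeR L R u →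
      ∀ i : ZLat r, ‖I.Q i u‖ + ‖I.HessF i u‖ ≤ C

end Interaction

/-- A uniform local inverse family for ∇V over the non-degenerate zero set. -/
def UnifLocalInv {d : ℕ} (V : Euc d → ℝ) (K : Euc d → Euc d → Euc d)
    (RV KV : ℝ) : Prop :=
  0 < RV ∧ 0 < KV ∧ ∀ z ∈ ZSet V,
    ContDiffOn ℝ 1 (K z) (closedBall 0 RV) ∧
    (∀ x ∈ closedBall 0 RV, gradient V (K z x) = x) ∧
    K z 0 = z ∧
    ∀ x ∈ closedBall 0 RV, ‖fderivWithin ℝ (K z) (closedBall 0 RV) x‖ ≤ KV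

/-- The derivatives DK_z are Lipschitz with constant C, uniformly over z ∈ Z_V. -/
def LipDerivInv {d : ℕ} (V : Euc d → ℝ) (K : Euc d → Euc d → Euc d)
    (RV C : ℝ) : Prop :=
  ∀ z ∈ ZSet V, ∀ x ∈ closedBall (0 : Euc d) RV, ∀ x' ∈ closedBall (0 : Euc d) RV,
    ‖fderivWithin ℝ (K z) (closedBall 0 RV) x - fderivWithin ℝ (K z) (closedBall 0 RV) x'‖
      ≤ C * ‖x - x'‖

lemma mem_translateSet {d : ℕ} {Λ : Set (Euc d)} {y q : Euc d} :
    q ∈ translateSet Λ y ↔ q + y ∈ Λ := by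
  constructor
  · rintro ⟨p, hp, rfl⟩; simpa using hp
  · intro h; exact ⟨q + y, h, add_sub_cancel_right q y⟩

lemma patch_translate {d : ℕ} {Λ : Set (Euc d)} {R₀ ρ : ℝ} {z z' : Euc d}
    (h : translateSet Λ z ∩ closedBall 0 (R₀ + ρ) = translateSet Λ z' ∩ closedBall 0 (R₀ + ρ))
    {x : Euc d} (hx : ‖x‖ ≤ ρ) :
    translateSet Λ (z + x) ∩ closedBall 0 R₀ = translateSet Λ (z' + x) ∩ closedBall 0 R₀ := by
  have key : ∀ z z' : Euc d,
      translateSet Λ z ∩ closedBall 0 (R₀ + ρ) = translateSet Λ z' ∩ closedBall 0 (R₀ + ρ) →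
      ∀ q, q ∈ translateSet Λ (z + x) ∩ closedBall 0 R₀ →
        q ∈ translateSet Λ (z' + x) ∩ closedBall 0 R₀ := by
    intro z z' h q hq
    obtain ⟨h1, h2⟩ := hq
    rw [mem_translateSet] at h1
    rw [mem_closedBall, dist_zero_right] at h2
    have hqx : q + x ∈ translateSet Λ z ∩ closedBall 0 (R₀ + ρ) := by
      constructor
      · rw [mem_translateSet]; rwa [show q + x + z = q + (z + x) by abel]
      · rw [mem_closedBall, dist_zero_right]
        calc ‖q + x‖ ≤ ‖q‖ + ‖x‖ := norm_add_le _ _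
          _ ≤ R₀ + ρ := add_le_add h2 hx
    rw [h] at hqx
    obtain ⟨h3, _⟩ := hqx
    rw [mem_translateSet] at h3
    refine ⟨?_, by rwa [mem_closedBall, dist_zero_right]⟩
    rw [mem_translateSet]
    rwa [show q + (z' + x) = q + x + z' by abel]
  ext q
  exact ⟨key z z' h q, key z' z h.symm q⟩

lemma gradient_contDiff {d : ℕ} {V : Euc d → ℝ} (hV : ContDiff ℝ 3 V) :
    ContDiff ℝ 2 (gradient V) := by
  have h1 : ContDiff ℝ 2 (fderiv ℝ V) := hV.fderiv_right (by norm_num)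
  have h2 := (InnerProductSpace.toDual ℝ (Euc d)).symm.contDiff.comp h1
  exact h2

lemma hess_continuous {d : ℕ} {V : Euc d → ℝ} (hV : ContDiff ℝ 3 V) :
    Continuous (Hess V) := by
  have := (gradient_contDiff hV).continuous_fderiv (by norm_num)
  exact this

lemma fderiv_shift {d : ℕ} {f : Euc d → ℝ} (hf : Differentiable ℝ f) (w x : Euc d) :
    fderiv ℝ (fun y => f (y + w)) x = fderiv ℝ f (x + w) := by
  have h1 : HasFDerivAt (fun y : Euc d => y + w) (ContinuousLinearMap.id ℝ (Euc d)) x :=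
    (hasFDerivAt_id x).add_const w
  have h2 : HasFDerivAt (fun y : Euc d => f (y + w))
      ((fderiv ℝ f (x + w)).comp (ContinuousLinearMap.id ℝ (Euc d))) x :=
    (hf (x + w)).hasFDerivAt.comp x h1
  simpa using h2.fderiv

lemma grad_translate {d : ℕ} {V : Euc d → ℝ} (hV : ContDiff ℝ 3 V) {z z' : Euc d} {ρ : ℝ}
    (h : ∀ x : Euc d, ‖x‖ ≤ ρ → V (z + x) = V (z' + x)) :
    ∀ x : Euc d, ‖x‖ < ρ → gradient V (z + x) = gradient V (z' + x) := by
  intro x hx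
  set w := z' - z with hw
  have hev : V =ᶠ[nhds (z + x)] fun y => V (y + w) := by
    have hball : Metric.ball z ρ ∈ nhds (z + x) := by
      apply isOpen_ball.mem_nhds
      rw [mem_ball, dist_eq_norm]
      simpa using hx
    filter_upwards [hball] with y hy
    have hyz : ‖y - z‖ ≤ ρ := by rw [mem_ball, dist_eq_norm] at hy; exact hy.le
    have := h (y - z) hyz
    rw [show z + (y - z) = y by abel, show z' + (y - z) = y + w by rw [hw]; abel] at this
    exact this
  have hfd : fderiv ℝ V (z + x) = fderiv ℝ V (z' + x) := by
    rw [hev.fderiv_eq, fderiv_shift (hV.differentiable (by norm_num)) w (z + x),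
      show z + x + w = z' + x by rw [hw]; abel]
  show (InnerProductSpace.toDual ℝ (Euc d)).symm (fderiv ℝ V (z + x)) = _
  rw [hfd]; rfl

lemma hess_translate {d : ℕ} {V : Euc d → ℝ} (hV : ContDiff ℝ 3 V) {z z' : Euc d} {ρ : ℝ}
    (h : ∀ x : Euc d, ‖x‖ ≤ ρ → V (z + x) = V (z' + x)) :
    ∀ x : Euc d, ‖x‖ < ρ → Hess V (z + x) = Hess V (z' + x) := by
  intro x hx
  set w := z' - z with hw
  have hgrad := grad_translate hV h
  have hev : gradient V =ᶠ[nhds (z + x)] fun y => gradient V (y + w) := by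
    have hball : Metric.ball z ρ ∈ nhds (z + x) := by
      apply isOpen_ball.mem_nhds
      rw [mem_ball, dist_eq_norm]
      simpa using hx
    filter_upwards [hball] with y hy
    have hyz : ‖y - z‖ < ρ := by rwa [mem_ball, dist_eq_norm] at hy
    have := hgrad (y - z) hyz
    rwa [show z + (y - z) = y by abel, show z' + (y - z) = y + w by rw [hw]; abel] at this
  have hdg : Differentiable ℝ (gradient V) :=
    (gradient_contDiff hV).differentiable (by norm_num)
  show fderiv ℝ (gradient V) (z + x) = fderiv ℝ (gradient V) (z' + x)
  rw [hev.fderiv_eq]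
  have h1 : HasFDerivAt (fun y : Euc d => y + w) (ContinuousLinearMap.id ℝ (Euc d)) (z + x) :=
    (hasFDerivAt_id _).add_const w
  have h2 : HasFDerivAt (fun y : Euc d => gradient V (y + w))
      ((fderiv ℝ (gradient V) (z + x + w)).comp (ContinuousLinearMap.id ℝ (Euc d))) (z + x) :=
    (hdg (z + x + w)).hasFDerivAt.comp (f := fun y : Euc d => y + w) (z + x) h1
  rw [h2.fderiv, show z + x + w = z' + x by rw [hw]; abel]
  simp

lemma zset_uniform {d : ℕ} (Λ : Set (Euc d)) (hFLC : HasFLC Λ) (V : Euc d → ℝ)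
    (hV3 : ContDiff ℝ 3 V) (hVeq : IsPatternEquivariant Λ V) :
    ∃ ε c : ℝ, 0 < ε ∧ ε ≤ 1 ∧ 1 ≤ c ∧ ∀ z ∈ ZSet V,
      ‖Ring.inverse (Hess V z)‖ ≤ c ∧
      ∀ ξ : Euc d, ‖ξ‖ ≤ ε → ‖Hess V (z + ξ) - Hess V z‖ ≤ 1 / (2 * c) := by
  obtain ⟨-, R₀, hR₀, heq⟩ := hVeq
  rcases eq_empty_or_nonempty (ZSet V) with hZ | hZ
  · exact ⟨1, 1, one_pos, le_refl 1, le_refl 1, fun z hz => by rw [hZ] at hz; exact hz.elim⟩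
  set p : Euc d → Set (Euc d) := fun y => translateSet Λ y ∩ closedBall 0 (R₀ + 2) with hp
  -- transfer of local structure
  have hsame : ∀ z z' : Euc d, p z = p z' → ∀ ξ : Euc d, ‖ξ‖ < 2 →
      Hess V (z + ξ) = Hess V (z' + ξ) := by
    intro z z' hpz ξ hξ
    have hVloc : ∀ x : Euc d, ‖x‖ ≤ 2 → V (z + x) = V (z' + x) := by
      intro x hx
      exact heq _ _ (patch_translate hpz hx)
    exact hess_translate hV3 hVloc ξ hξ
  have hGfin : (p '' ZSet V).Finite := by
    apply (hFLC (R₀ + 2) (by linarith)).subset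
    rintro s ⟨y, -, rfl⟩
    exact ⟨y, rfl⟩
  have hwit : ∀ s ∈ p '' ZSet V, ∃ z, z ∈ ZSet V ∧ p z = s := by
    rintro s ⟨z, hz, rfl⟩; exact ⟨z, hz, rfl⟩
  choose! zw hzw1 hzw2 using hwit
  set T := hGfin.toFinset with hT
  have hTne : T.Nonempty := by
    rw [hT, Set.Finite.toFinset_nonempty]
    exact hZ.image p
  set c : ℝ := T.sup' hTne (fun s => ‖Ring.inverse (Hess V (zw s))‖) + 1 with hc
  have hcmem : ∀ s ∈ T, ‖Ring.inverse (Hess V (zw s))‖ ≤ c - 1 := by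
    intro s hs; rw [hc, add_sub_cancel_right]; exact Finset.le_sup' (f := fun s => ‖Ring.inverse (Hess V (zw s))‖) hs
  have hc1 : 1 ≤ c := by
    obtain ⟨s₀, hs₀⟩ := hTne
    have := (norm_nonneg (Ring.inverse (Hess V (zw s₀)))).trans (hcmem s₀ hs₀)
    linarith
  have hcpos : (0:ℝ) < 1 / (2 * c) := by positivity
  -- for each z in ZSet, its Hessian agrees with that of the witness
  have hhess_eq : ∀ z ∈ ZSet V, ∀ ξ : Euc d, ‖ξ‖ < 2 →
      Hess V (z + ξ) = Hess V (zw (p z) + ξ) := by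
    intro z hz ξ hξ
    have hmem : p z ∈ p '' ZSet V := ⟨z, hz, rfl⟩
    exact hsame z (zw (p z)) (hzw2 _ hmem).symm ξ hξ
  have hhess_eq0 : ∀ z ∈ ZSet V, Hess V z = Hess V (zw (p z)) := by
    intro z hz
    have := hhess_eq z hz 0 (by norm_num)
    simpa using this
  -- continuity: choose δ for each patch class
  have hδex : ∀ s ∈ T, ∃ δ : ℝ, 0 < δ ∧ δ ≤ 1 ∧ ∀ ξ : Euc d, ‖ξ‖ ≤ δ →
      ‖Hess V (zw s + ξ) - Hess V (zw s)‖ ≤ 1 / (2 * c) := by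
    intro s _
    have hcont : ContinuousAt (fun ξ : Euc d => Hess V (zw s + ξ)) 0 :=
      ((hess_continuous hV3).comp (continuous_const.add continuous_id)).continuousAt
    rw [Metric.continuousAt_iff] at hcont
    obtain ⟨δ', hδ'pos, hδ'⟩ := hcont (1 / (2 * c)) hcpos
    refine ⟨min (δ' / 2) 1, by positivity, min_le_right _ _, fun ξ hξ => ?_⟩
    have h1 : dist ξ (0 : Euc d) < δ' := by
      rw [dist_zero_right]
      calc ‖ξ‖ ≤ min (δ' / 2) 1 := hξ
        _ ≤ δ' / 2 := min_le_left _ _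
        _ < δ' := by linarith
    have := hδ' h1
    rw [dist_eq_norm] at this
    simpa using this.le
  choose! δf hδpos hδle1 hδspec using hδex
  set ε : ℝ := T.inf' hTne δf with hε
  have hεpos : 0 < ε := by
    rw [hε, Finset.lt_inf'_iff]
    exact fun s hs => hδpos s hs
  have hεle1 : ε ≤ 1 := by
    obtain ⟨s₀, hs₀⟩ := hTne
    exact (Finset.inf'_le _ hs₀).trans (hδle1 s₀ hs₀)
  refine ⟨ε, c, hεpos, hεle1, hc1, fun z hz => ?_⟩
  have hmemT : p z ∈ T := by
    rw [hT, Set.Finite.mem_toFinset]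
    exact ⟨z, hz, rfl⟩
  constructor
  · rw [hhess_eq0 z hz]
    exact (hcmem _ hmemT).trans (by linarith)
  · intro ξ hξ
    have hξ2 : ‖ξ‖ < 2 := lt_of_le_of_lt (hξ.trans hεle1) (by norm_num)
    rw [hhess_eq z hz ξ hξ2, hhess_eq0 z hz]
    exact hδspec _ hmemT ξ (hξ.trans (Finset.inf'_le _ hmemT))

lemma grad_mean_value {d : ℕ} {V : Euc d → ℝ} (hV3 : ContDiff ℝ 3 V) {z : Euc d} {ε c : ℝ}
    (hd : ∀ ξ : Euc d, ‖ξ‖ ≤ ε → ‖Hess V (z + ξ) - Hess V z‖ ≤ 1 / (2 * c))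
    {x y : Euc d} (hx : ‖x - z‖ ≤ ε) (hy : ‖y - z‖ ≤ ε) :
    ‖(gradient V x - Hess V z x) - (gradient V y - Hess V z y)‖ ≤ 1 / (2 * c) * ‖x - y‖ := by
  have hdg : Differentiable ℝ (gradient V) := (gradient_contDiff hV3).differentiable (by norm_num)
  have key := Convex.norm_image_sub_le_of_norm_fderiv_le
    (f := fun p : Euc d => gradient V p - Hess V z p) (C := 1 / (2 * c))
    (s := closedBall z ε) (x := y) (y := x)
    (fun q _ => ((hdg q).sub ((Hess V z).differentiableAt)))
    (fun q hq => by
      rw [fderiv_fun_sub (hdg q) ((Hess V z).differentiableAt), (Hess V z).fderiv]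
      have hq' : ‖q - z‖ ≤ ε := by rwa [mem_closedBall, dist_eq_norm] at hq
      have := hd (q - z) hq'
      rwa [show z + (q - z) = q by abel] at this)
    (convex_closedBall z ε)
    (by rwa [mem_closedBall, dist_eq_norm]) (by rwa [mem_closedBall, dist_eq_norm])
  exact key
namespace Interaction
variable {r d : ℕ} (I : Interaction r d)

lemma mem_J {i B : ZLat r} {Bs : Finset (ZLat r)} (hBs : Bs ∈ I.Si i) (hB : B ∈ Bs) :
    B ∈ I.J i := Finset.mem_biUnion.2 ⟨Bs, hBs, hB⟩

lemma F_locdep (i : ZLat r) {u v : Config r d} (h : ∀ j ∈ I.J i, u j = v j) :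
    I.F i u = I.F i v := by
  unfold F
  apply Finset.sum_congr rfl
  intro B hB
  have hBS : B ∈ I.S ∧ i ∈ B := by
    have := (Set.Finite.mem_toFinset _).1 hB
    exact this
  exact I.local_dep B hBS.1 u v (fun j hj => h j (I.mem_J hB hj))

lemma locF_indep (i : ZLat r) (u v : Config r d) : I.locF i u = I.locF i v := by
  funext w
  apply F_locdep
  intro j hj
  simp [patch, hj]

lemma restr_patch (i : ZLat r) (u : Config r d) (w : {j // j ∈ I.J i} → Euc d) :
    I.restr i (I.patch i u w) = w := by
  funext j
  simp [restr, patch, j.2]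

lemma mem_J_self {i : ZLat r} {Bs : Finset (ZLat r)} (hBs : Bs ∈ I.Si i) : i ∈ I.J i := by
  have hBS : Bs ∈ I.S ∧ i ∈ Bs := by
    have : Bs ∈ (I.locFin i).toFinset := hBs
    rwa [Set.Finite.mem_toFinset] at this
  exact I.mem_J hBs hBS.2

lemma Si_empty (i : ZLat r) (hi : i ∉ I.J i) : I.Si i = ∅ := by
  by_contra h
  obtain ⟨Bs, hBs⟩ := Finset.nonempty_of_ne_empty h
  exact hi (I.mem_J_self hBs)

lemma Q_of_not_mem (i : ZLat r) (hi : i ∉ I.J i) (u : Config r d) : I.Q i u = 0 := by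
  unfold Q
  have : (fun x => I.F i (Function.update u i x)) = fun _ => (0:ℝ) := by
    funext x
    unfold F
    rw [I.Si_empty i hi, Finset.sum_empty]
  rw [this]
  simp [gradient]

/-- The coordinate inclusion as a continuous linear map. -/
def sing (i : ZLat r) (hi : i ∈ I.J i) : Euc d →L[ℝ] ({j // j ∈ I.J i} → Euc d) :=
  LinearMap.toContinuousLinearMap
    (LinearMap.single ℝ (fun _ : {j // j ∈ I.J i} => Euc d) ⟨i, hi⟩)

lemma sing_apply (i : ZLat r) (hi : i ∈ I.J i) (x : Euc d) :
    I.sing i hi x = Pi.single (⟨i, hi⟩ : {j // j ∈ I.J i}) x := rfl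

lemma norm_sing_le (i : ZLat r) (hi : i ∈ I.J i) : ‖I.sing i hi‖ ≤ 1 := by
  apply ContinuousLinearMap.opNorm_le_bound _ zero_le_one
  intro x
  rw [sing_apply, Pi.norm_single, one_mul]

lemma Q_eq (i : ZLat r) (hi : i ∈ I.J i) (u u₀ : Config r d)
    (hdiff : Differentiable ℝ (I.locF i u₀)) :
    I.Q i u = (InnerProductSpace.toDual ℝ (Euc d)).symm
      ((fderiv ℝ (I.locF i u₀) (I.restr i u)).comp (I.sing i hi)) := by
  classical
  set k : {j // j ∈ I.J i} := ⟨i, hi⟩ with hk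
  set w₀ := I.restr i u with hw₀
  set A : Euc d → ({j // j ∈ I.J i} → Euc d) := fun x => Function.update w₀ k x with hA
  have hfun : (fun x => I.F i (Function.update u i x)) = fun x => I.locF i u₀ (A x) := by
    funext x
    show I.F i (Function.update u i x) = I.F i (I.patch i u₀ (A x))
    apply F_locdep
    intro j hj
    rw [Function.update_apply]
    simp only [patch, hj, dif_pos]
    rw [hA]
    simp only [Function.update_apply]
    by_cases hji : j = i
    · subst hji; simp [hk]
    · rw [if_neg hji, if_neg (by simp [hk, Subtype.ext_iff, hji]), hw₀]
      rfl
  have hAalt : A = fun x => w₀ + Pi.single k (x - w₀ k) := by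
    funext x j
    by_cases hjk : j = k
    · subst hjk; simp [hA]
    · simp [hA, Function.update_apply, hjk, Pi.single_eq_of_ne hjk]
  have hAder : HasFDerivAt A (I.sing i hi) (u i) := by
    rw [hAalt]
    have h1 : HasFDerivAt (fun x : Euc d => (I.sing i hi) (x - w₀ k)) (I.sing i hi) (u i) := by
      have hinner : HasFDerivAt (fun x : Euc d => x - w₀ k)
          (ContinuousLinearMap.id ℝ (Euc d)) (u i) :=
        (hasFDerivAt_id (u i)).sub_const (w₀ k)
      have houter : HasFDerivAt (fun y => (I.sing i hi) y) (I.sing i hi)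
          ((fun x : Euc d => x - w₀ k) (u i)) :=
        (I.sing i hi).hasFDerivAt
      simpa using HasFDerivAt.comp (f := fun x : Euc d => x - w₀ k) (u i) houter hinner
    exact h1.const_add w₀
  have hAui : A (u i) = w₀ := Function.update_eq_self k w₀
  have hcomp : HasFDerivAt (fun x => I.locF i u₀ (A x))
      ((fderiv ℝ (I.locF i u₀) w₀).comp (I.sing i hi)) (u i) := by
    have := ((hdiff (A (u i))).hasFDerivAt).comp (u i) hAder
    rwa [hAui] at this
  unfold Q
  rw [hfun]
  show (InnerProductSpace.toDual ℝ (Euc d)).symm (fderiv ℝ (fun x => I.locF i u₀ (A x)) (u i)) = _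
  rw [hcomp.fderiv]

end Interaction

namespace Interaction
variable {r d : ℕ}

lemma Q_lip (I : Interaction r d) (hC2 : I.IsC2)
    (L : EuclideanSpace ℝ (Fin r) →ₗ[ℝ] Euc d) (R' : ℝ) (hR' : 0 < R') (C₀ : ℝ)
    (hC₀ : ∀ u : Config r d, OfTypeR L R' u → ∀ i : ZLat r, ‖I.Q i u‖ + ‖I.HessF i u‖ ≤ C₀)
    (i : ZLat r) (u v : Config r d) (hu : OfTypeR L R' u) (hv : OfTypeR L R' v) :
    ‖I.Q i u - I.Q i v‖ ≤ C₀ * ‖I.restr i u - I.restr i v‖ := by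
  classical
  set ℓ : Config r d := fun j => L (latCast j) with hℓ
  have hℓtype : OfTypeR L R' ℓ := fun j => by simp [hℓ, hR'.le]
  have hC₀0 : 0 ≤ C₀ := by
    have := hC₀ ℓ hℓtype i
    have h1 : (0:ℝ) ≤ ‖I.Q i ℓ‖ + ‖I.HessF i ℓ‖ := by positivity
    linarith
  by_cases hi : i ∈ I.J i
  · set G := I.locF i ℓ with hG
    have hGC2 : ContDiff ℝ 2 G := hC2 i ℓ
    have hGdiff : Differentiable ℝ G := hGC2.differentiable (by norm_num)
    set D : ({j // j ∈ I.J i} → Euc d) → ({j // j ∈ I.J i} → Euc d) →L[ℝ] ℝ :=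
      fun w => fderiv ℝ G w with hD
    have hDdiff : Differentiable ℝ D := (hGC2.fderiv_right (m := 1) (by norm_num)).differentiable (by norm_num)
    set Ω : Set ({j // j ∈ I.J i} → Euc d) :=
      {w | ∀ j : {j // j ∈ I.J i}, ‖w j - L (latCast j.1)‖ ≤ R'} with hΩ
    have hconv : Convex ℝ Ω := by
      have : Ω = ⋂ j : {j // j ∈ I.J i},
          (LinearMap.proj (R := ℝ) (φ := fun _ : {j // j ∈ I.J i} => Euc d) j) ⁻¹'
            (closedBall (L (latCast j.1)) R') := by
        ext w
        simp [hΩ, mem_closedBall, dist_eq_norm, LinearMap.proj_apply]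
      rw [this]
      exact convex_iInter fun j => (convex_closedBall _ _).linear_preimage _
    have hbound : ∀ w ∈ Ω, ‖fderiv ℝ D w‖ ≤ C₀ := by
      intro w hw
      have hptype : OfTypeR L R' (I.patch i ℓ w) := by
        intro j
        by_cases hj : j ∈ I.J i
        · simpa [Interaction.patch, hj] using hw ⟨j, hj⟩
        · simp [Interaction.patch, hj, hℓ, hR'.le]
      have hHF : I.HessF i (I.patch i ℓ w) = fderiv ℝ D w := by
        unfold HessF
        rw [I.locF_indep i (I.patch i ℓ w) ℓ, I.restr_patch]
      have := hC₀ _ hptype i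
      rw [hHF] at this
      have := (norm_nonneg (I.Q i (I.patch i ℓ w)))
      linarith [hC₀ _ hptype i, hHF ▸ (hC₀ _ hptype i)]
    have hru : I.restr i u ∈ Ω := fun j => hu j.1
    have hrv : I.restr i v ∈ Ω := fun j => hv j.1
    have hmvt := Convex.norm_image_sub_le_of_norm_fderiv_le
      (f := D) (C := C₀) (s := Ω)
      (fun w _ => hDdiff w) hbound hconv hrv hru
    rw [I.Q_eq i hi u ℓ hGdiff, I.Q_eq i hi v ℓ hGdiff]
    rw [← map_sub]
    rw [LinearIsometryEquiv.norm_map]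
    rw [← ContinuousLinearMap.sub_comp]
    calc ‖(D (I.restr i u) - D (I.restr i v)).comp (I.sing i hi)‖
        ≤ ‖D (I.restr i u) - D (I.restr i v)‖ * ‖I.sing i hi‖ :=
          ContinuousLinearMap.opNorm_comp_le _ _
      _ ≤ (C₀ * ‖I.restr i u - I.restr i v‖) * 1 := by
          apply mul_le_mul hmvt (I.norm_sing_le i hi) (norm_nonneg _)
          positivity
      _ = C₀ * ‖I.restr i u - I.restr i v‖ := mul_one _
  · rw [I.Q_of_not_mem i hi u, I.Q_of_not_mem i hi v]
    simp
    positivity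

end Interaction



/-- Theorem 1 (main): existence and uniqueness of equilibrium configurations of any type
for the magnified potential λV, coded by configurations in the non-degenerate zero set. -/
theorem equilibrium_configurations_exist {d r : ℕ}
    (Λ : Set (Euc d)) (hDel : IsDeloneSet Λ) (hRep : IsRepetitive Λ) (hFLC : HasFLC Λ)
    (V : Euc d → ℝ) (hV : BoundedC3 V) (hVeq : IsPatternEquivariant Λ V)
    (hVnd : NonDegeneratePotential V)
    (I : Interaction r d) (hC2 : I.IsC2) (hH2 : I.SatisfiesH2) :
    ∀ (L : EuclideanSpace ℝ (Fin r) →ₗ[ℝ] Euc d) (R : ℝ), 0 < R →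
      ∃ lam₀ > (0 : ℝ), ∃ ε > (0 : ℝ), ∀ lam : ℝ, lam > lam₀ →
        ∀ a : Config r d, (∀ i : ZLat r, a i ∈ ZSet V ∧ ‖a i - L (latCast i)‖ ≤ R) →
          (∃! u : Config r d,
            (∀ i : ZLat r, ‖u i - a i‖ ≤ ε) ∧
            (∀ i : ZLat r, I.Q i u + lam • gradient V (u i) = 0)) ∧
          (∀ u : Config r d,
            ((∀ i : ZLat r, ‖u i - a i‖ ≤ ε) ∧
             (∀ i : ZLat r, I.Q i u + lam • gradient V (u i) = 0)) →
            ∃ M : ℝ, ∀ i : ZLat r, ‖u i - L (latCast i)‖ ≤ M) := by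
  intro L R hR
  obtain ⟨hV3, -⟩ := hV
  obtain ⟨ε, c, hε0, hε1, hc1, hzu⟩ := zset_uniform Λ hFLC V hV3 hVeq
  have hcpos : (0:ℝ) < c := lt_of_lt_of_le one_pos hc1
  set R' : ℝ := R + 1 with hR'def
  have hR' : 0 < R' := by rw [hR'def]; linarith
  obtain ⟨C, hC⟩ := hH2 L R' hR'
  have hC0 : 0 ≤ C := by
    have hℓ : OfTypeR L R' (fun j : ZLat r => L (latCast j)) := by
      intro j; simpa using hR'.le
    have h := hC _ hℓ (fun _ => (0:ℤ))
    have h1 : (0:ℝ) ≤ ‖I.Q (fun _ => (0:ℤ)) (fun j => L (latCast j))‖ +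
        ‖I.HessF (fun _ => (0:ℤ)) (fun j => L (latCast j))‖ := by positivity
    linarith
  have hCpos : (0:ℝ) < C + 1 := by linarith
  set lam₀ : ℝ := 4 * c * (C + 1) * (1 + 1 / ε) + 1 with hlam₀def
  have hlam₀pos : 0 < lam₀ := by rw [hlam₀def]; positivity
  refine ⟨lam₀, hlam₀pos, ε, hε0, fun lam hlam a ha => ?_⟩
  have hlampos : 0 < lam := lt_trans hlam₀pos hlam
  have hεinv : 1 ≤ 1 / ε := by
    rw [le_div_iff₀ hε0]; linarith
  have hApos : (0:ℝ) < 4 * c * (C + 1) := mul_pos (by linarith) hCpos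
  have key1 : 2 * (c * C) ≤ lam * ε := by
    have e1 : lam₀ * ε = 4 * c * (C + 1) * (ε + 1) + ε := by
      rw [hlam₀def]; field_simp
    have e2 : lam₀ * ε ≤ lam * ε := mul_le_mul_of_nonneg_right hlam.le hε0.le
    have e3 : 4 * c * (C + 1) ≤ 4 * c * (C + 1) * (ε + 1) :=
      le_mul_of_one_le_right hApos.le (by linarith)
    have e4 : 2 * (c * C) ≤ 4 * c * (C + 1) := by nlinarith
    linarith
  have key2 : 4 * (c * C) ≤ lam := by
    have e1 : 4 * c * (C + 1) ≤ 4 * c * (C + 1) * (1 + 1 / ε) :=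
      le_mul_of_one_le_right hApos.le (by linarith)
    have e2 : 4 * (c * C) ≤ 4 * c * (C + 1) := by nlinarith
    calc 4 * (c * C) ≤ 4 * c * (C + 1) := e2
      _ ≤ 4 * c * (C + 1) * (1 + 1 / ε) := e1
      _ ≤ lam₀ := by rw [hlam₀def]; linarith
      _ ≤ lam := hlam.le
  have hd1 : 1 / lam * (c * C) ≤ ε / 2 := by
    rw [one_div_mul_eq_div, div_le_iff₀ hlampos]
    nlinarith
  have hd2 : 1 / lam * (c * C) ≤ 1 / 4 := by
    rw [one_div_mul_eq_div, div_le_iff₀ hlampos]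
    nlinarith
  -- the Banach space of bounded configurations
  set E := BoundedContinuousFunction (ZLat r) (Euc d) with hE
  have hmkE_norm : ∀ (f : ZLat r → Euc d) (h : ∀ i, ‖f i‖ ≤ ε),
      ‖BoundedContinuousFunction.ofNormedAddCommGroupDiscrete f ε h‖ ≤ ε := by
    intro f h
    exact (BoundedContinuousFunction.norm_le hε0.le).2 (fun i => h i)
  set cfg : E → Config r d := fun w j => a j + w j with hcfg
  have haZ : ∀ i, a i ∈ ZSet V := fun i => (ha i).1
  have haR : ∀ i, ‖a i - L (latCast i)‖ ≤ R := fun i => (ha i).2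
  have hgrad0 : ∀ i, gradient V (a i) = 0 := fun i => (haZ i).1
  have hHunit : ∀ i, IsUnit (Hess V (a i)) := fun i => (haZ i).2
  set Bi : ZLat r → (Euc d →L[ℝ] Euc d) := fun i => Ring.inverse (Hess V (a i)) with hBi
  have hBi_le : ∀ i, ‖Bi i‖ ≤ c := fun i => (hzu _ (haZ i)).1
  have hhd : ∀ i, ∀ ξ : Euc d, ‖ξ‖ ≤ ε →
      ‖Hess V (a i + ξ) - Hess V (a i)‖ ≤ 1 / (2 * c) := fun i => (hzu _ (haZ i)).2
  have hBH : ∀ i (x : Euc d), Bi i (Hess V (a i) x) = x := by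
    intro i x
    have h := Ring.inverse_mul_cancel _ (hHunit i)
    rw [hBi, ← ContinuousLinearMap.mul_apply, h, ContinuousLinearMap.one_apply]
  have hHB : ∀ i (x : Euc d), Hess V (a i) (Bi i x) = x := by
    intro i x
    have h := Ring.mul_inverse_cancel _ (hHunit i)
    rw [hBi, ← ContinuousLinearMap.mul_apply, h, ContinuousLinearMap.one_apply]
  have hcfg_type : ∀ w : E, ‖w‖ ≤ ε → OfTypeR L R' (cfg w) := by
    intro w hw i
    have : cfg w i - L (latCast i) = (a i - L (latCast i)) + w i := by
      rw [hcfg]; exact add_sub_right_comm (a i) (w i) (L (latCast i))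
    rw [this]
    calc ‖(a i - L (latCast i)) + w i‖ ≤ ‖a i - L (latCast i)‖ + ‖w i‖ := norm_add_le _ _
      _ ≤ R + ε := add_le_add (haR i) ((BoundedContinuousFunction.norm_coe_le_norm w i).trans hw)
      _ ≤ R' := by rw [hR'def]; linarith
  have hQb : ∀ w : E, ‖w‖ ≤ ε → ∀ i, ‖I.Q i (cfg w)‖ ≤ C := by
    intro w hw i
    have := hC _ (hcfg_type w hw) i
    have h2 := norm_nonneg (I.HessF i (cfg w))
    linarith
  have hQlip : ∀ (w w' : E), ‖w‖ ≤ ε → ‖w'‖ ≤ ε → ∀ i,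
      ‖I.Q i (cfg w) - I.Q i (cfg w')‖ ≤ C * ‖w - w'‖ := by
    intro w w' hw hw' i
    have h := I.Q_lip hC2 L R' hR' C hC i (cfg w) (cfg w') (hcfg_type w hw) (hcfg_type w' hw')
    have hr : ‖I.restr i (cfg w) - I.restr i (cfg w')‖ ≤ ‖w - w'‖ := by
      rw [pi_norm_le_iff_of_nonneg (norm_nonneg _)]
      intro j
      have h1 : (I.restr i (cfg w) - I.restr i (cfg w')) j = w j.1 - w' j.1 := by
        simp only [Pi.sub_apply, Interaction.restr, hcfg]
        abel
      rw [h1]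
      have := BoundedContinuousFunction.norm_coe_le_norm (w - w') j.1
      rwa [BoundedContinuousFunction.coe_sub, Pi.sub_apply] at this
    calc ‖I.Q i (cfg w) - I.Q i (cfg w')‖ ≤ C * ‖I.restr i (cfg w) - I.restr i (cfg w')‖ := h
      _ ≤ C * ‖w - w'‖ := mul_le_mul_of_nonneg_left hr hC0
  -- the key mean-value estimate
  have hterm : ∀ (i : ZLat r) (ξ η : Euc d), ‖ξ‖ ≤ ε → ‖η‖ ≤ ε →
      ‖(ξ - η) - Bi i (gradient V (a i + ξ) - gradient V (a i + η))‖ ≤ 1/2 * ‖ξ - η‖ := by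
    intro i ξ η hξ hη
    set x := a i + ξ with hx
    set y := a i + η with hy
    have hxa : ‖x - a i‖ ≤ ε := by rw [hx, add_sub_cancel_left]; exact hξ
    have hya : ‖y - a i‖ ≤ ε := by rw [hy, add_sub_cancel_left]; exact hη
    have hmv := grad_mean_value hV3 (hhd i) hxa hya
    have hxy : x - y = ξ - η := by rw [hx, hy]; abel
    have hrw : (ξ - η) - Bi i (gradient V x - gradient V y) =
        - Bi i ((gradient V x - Hess V (a i) x) - (gradient V y - Hess V (a i) y)) := by
      have h1 : ξ - η = Bi i (Hess V (a i) (x - y)) := by rw [hBH i (x - y), hxy]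
      rw [h1, ← map_sub, ← map_neg]
      congr 1
      rw [map_sub]
      abel
    rw [hrw, norm_neg]
    calc ‖Bi i _‖ ≤ ‖Bi i‖ * ‖(gradient V x - Hess V (a i) x) - (gradient V y - Hess V (a i) y)‖ :=
          ContinuousLinearMap.le_opNorm _ _
      _ ≤ c * (1 / (2 * c) * ‖x - y‖) :=
          mul_le_mul (hBi_le i) hmv (norm_nonneg _) hcpos.le
      _ = 1/2 * ‖ξ - η‖ := by rw [hxy]; field_simp
  set Φraw : E → ZLat r → Euc d :=
    fun w i => w i - Bi i ((1/lam) • I.Q i (cfg w) + gradient V (cfg w i)) with hΦraw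
  have hΦdecomp : ∀ (w : E) (i : ZLat r),
      Φraw w i = (w i - Bi i (gradient V (cfg w i))) - (1/lam) • Bi i (I.Q i (cfg w)) := by
    intro w i
    rw [hΦraw]
    simp only [map_add, map_smul]
    abel
  have hmap : ∀ w : E, ‖w‖ ≤ ε → ∀ i, ‖Φraw w i‖ ≤ ε := by
    intro w hw i
    have hwi : ‖w i‖ ≤ ε := (BoundedContinuousFunction.norm_coe_le_norm w i).trans hw
    have ht := hterm i (w i) 0 hwi (by simp [hε0.le])
    rw [sub_zero, add_zero, hgrad0 i, sub_zero] at ht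
    have hQ : ‖(1/lam) • Bi i (I.Q i (cfg w))‖ ≤ ε / 2 := by
      rw [norm_smul, Real.norm_eq_abs, abs_of_pos (by positivity : (0:ℝ) < 1/lam)]
      calc 1/lam * ‖Bi i (I.Q i (cfg w))‖
          ≤ 1/lam * (c * C) := by
            apply mul_le_mul_of_nonneg_left _ (by positivity)
            calc ‖Bi i (I.Q i (cfg w))‖ ≤ ‖Bi i‖ * ‖I.Q i (cfg w)‖ :=
                  ContinuousLinearMap.le_opNorm _ _
              _ ≤ c * C := mul_le_mul (hBi_le i) (hQb w hw i) (norm_nonneg _) hcpos.le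
        _ ≤ ε / 2 := hd1
    have hcw : cfg w i = a i + w i := rfl
    calc ‖Φraw w i‖
        = ‖(w i - Bi i (gradient V (a i + w i))) - (1/lam) • Bi i (I.Q i (cfg w))‖ := by
          rw [hΦdecomp, hcw]
      _ ≤ ‖w i - Bi i (gradient V (a i + w i))‖ + ‖(1/lam) • Bi i (I.Q i (cfg w))‖ :=
          norm_sub_le _ _
      _ ≤ 1/2 * ‖w i‖ + ε / 2 := add_le_add ht hQ
      _ ≤ ε := by linarith
  have hlip : ∀ (w w' : E), ‖w‖ ≤ ε → ‖w'‖ ≤ ε → ∀ i,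
      ‖Φraw w i - Φraw w' i‖ ≤ 3/4 * ‖w - w'‖ := by
    intro w w' hw hw' i
    have hwi : ‖w i‖ ≤ ε := (BoundedContinuousFunction.norm_coe_le_norm w i).trans hw
    have hwi' : ‖w' i‖ ≤ ε := (BoundedContinuousFunction.norm_coe_le_norm w' i).trans hw'
    have ht := hterm i (w i) (w' i) hwi hwi'
    have hsub : ‖w i - w' i‖ ≤ ‖w - w'‖ := by
      have := BoundedContinuousFunction.norm_coe_le_norm (w - w') i
      rwa [BoundedContinuousFunction.coe_sub, Pi.sub_apply] at this
    have hdec : Φraw w i - Φraw w' i =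
        ((w i - w' i) - Bi i (gradient V (cfg w i) - gradient V (cfg w' i)))
          - (1/lam) • Bi i (I.Q i (cfg w) - I.Q i (cfg w')) := by
      rw [hΦdecomp, hΦdecomp]
      rw [map_sub, map_sub, smul_sub]
      abel
    have hQpart : ‖(1/lam) • Bi i (I.Q i (cfg w) - I.Q i (cfg w'))‖ ≤ 1/4 * ‖w - w'‖ := by
      rw [norm_smul, Real.norm_eq_abs, abs_of_pos (by positivity : (0:ℝ) < 1/lam)]
      calc 1/lam * ‖Bi i (I.Q i (cfg w) - I.Q i (cfg w'))‖
          ≤ 1/lam * (c * (C * ‖w - w'‖)) := by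
            apply mul_le_mul_of_nonneg_left _ (by positivity)
            calc ‖Bi i (I.Q i (cfg w) - I.Q i (cfg w'))‖
                ≤ ‖Bi i‖ * ‖I.Q i (cfg w) - I.Q i (cfg w')‖ := ContinuousLinearMap.le_opNorm _ _
              _ ≤ c * (C * ‖w - w'‖) := mul_le_mul (hBi_le i) (hQlip w w' hw hw' i)
                  (norm_nonneg _) hcpos.le
        _ ≤ 1/4 * ‖w - w'‖ := by
            have h := mul_le_mul_of_nonneg_right hd2 (norm_nonneg (w - w'))
            calc 1/lam * (c * (C * ‖w - w'‖)) = (1/lam * (c * C)) * ‖w - w'‖ := by ring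
              _ ≤ 1/4 * ‖w - w'‖ := h
    calc ‖Φraw w i - Φraw w' i‖
        = ‖((w i - w' i) - Bi i (gradient V (cfg w i) - gradient V (cfg w' i)))
            - (1/lam) • Bi i (I.Q i (cfg w) - I.Q i (cfg w'))‖ := by rw [hdec]
      _ ≤ ‖(w i - w' i) - Bi i (gradient V (cfg w i) - gradient V (cfg w' i))‖
            + ‖(1/lam) • Bi i (I.Q i (cfg w) - I.Q i (cfg w'))‖ := norm_sub_le _ _
      _ ≤ 1/2 * ‖w i - w' i‖ + 1/4 * ‖w - w'‖ := add_le_add ht hQpart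
      _ ≤ 3/4 * ‖w - w'‖ := by nlinarith [norm_nonneg (w - w'), hsub]
  -- the contraction on the closed ball
  set X : Set E := closedBall 0 ε with hXdef
  haveI : CompleteSpace X := Metric.isClosed_closedBall.completeSpace_coe
  haveI : Nonempty X := ⟨⟨0, Metric.mem_closedBall_self hε0.le⟩⟩
  have hmem : ∀ w : E, w ∈ X ↔ ‖w‖ ≤ ε := fun w => mem_closedBall_zero_iff
  set Φ : X → X := fun w =>
    ⟨BoundedContinuousFunction.ofNormedAddCommGroupDiscrete (Φraw w.1) ε
        (hmap w.1 ((hmem _).1 w.2)),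
      (hmem _).2 (hmkE_norm _ _)⟩ with hΦ
  have hΦcoe : ∀ (w : X) (i : ZLat r), ((Φ w : X) : E) i = Φraw w.1 i := fun w i => rfl
  have hcontr : ContractingWith (3/4 : NNReal) Φ := by
    constructor
    · rw [← NNReal.coe_lt_coe]; norm_num
    · apply LipschitzWith.of_dist_le_mul
      intro p q
      have hpq : dist p q = ‖p.1 - q.1‖ := by rw [Subtype.dist_eq, dist_eq_norm]
      have hK : ((3/4 : NNReal) : ℝ) = 3/4 := by norm_num
      rw [Subtype.dist_eq, hK]
      rw [BoundedContinuousFunction.dist_le (by positivity)]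
      intro i
      rw [dist_eq_norm]
      have h := hlip p.1 q.1 ((hmem _).1 p.2) ((hmem _).1 q.2) i
      calc ‖((Φ p : X) : E) i - ((Φ q : X) : E) i‖ = ‖Φraw p.1 i - Φraw q.1 i‖ := rfl
        _ ≤ 3/4 * ‖p.1 - q.1‖ := h
        _ = 3/4 * dist p q := by rw [hpq]
  set wfix : X := ContractingWith.fixedPoint Φ hcontr with hwfix
  have hfix : Φ wfix = wfix := hcontr.fixedPoint_isFixedPt
  -- fixed points are exactly equilibrium configurations
  have heqv : ∀ w : X, Φ w = w ↔
      ∀ i : ZLat r, I.Q i (cfg w.1) + lam • gradient V (cfg w.1 i) = 0 := by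
    intro w
    constructor
    · intro h i
      have h0 : Φraw w.1 i = w.1 i := by
        exact congrArg (fun v : X => (v : E) i) h
      have h1 : Bi i ((1/lam) • I.Q i (cfg w.1) + gradient V (cfg w.1 i)) = 0 := by
        rw [hΦraw] at h0
        exact sub_eq_self.mp h0
      have h2 : (1/lam) • I.Q i (cfg w.1) + gradient V (cfg w.1 i) = 0 := by
        have h3 := congrArg (Hess V (a i)) h1
        rwa [hHB, map_zero] at h3
      have hg : lam • ((1/lam) • I.Q i (cfg w.1) + gradient V (cfg w.1 i)) =
          I.Q i (cfg w.1) + lam • gradient V (cfg w.1 i) := by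
        rw [smul_add, smul_smul, mul_one_div, div_self (ne_of_gt hlampos), one_smul]
      rw [← hg, h2, smul_zero]
    · intro h
      apply Subtype.ext
      apply BoundedContinuousFunction.ext
      intro i
      show Φraw w.1 i = w.1 i
      have h2 : (1/lam) • I.Q i (cfg w.1) + gradient V (cfg w.1 i) = 0 := by
        have hg : (1/lam) • (I.Q i (cfg w.1) + lam • gradient V (cfg w.1 i)) =
            (1/lam) • I.Q i (cfg w.1) + gradient V (cfg w.1 i) := by
          rw [smul_add, smul_smul, one_div, inv_mul_cancel₀ (ne_of_gt hlampos), one_smul]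
        rw [← hg, h i, smul_zero]
      rw [hΦraw]
      simp only [h2, map_zero, sub_zero]
  set u₀ : Config r d := cfg wfix.1 with hu₀
  have hprop : (∀ i : ZLat r, ‖u₀ i - a i‖ ≤ ε) ∧
      (∀ i : ZLat r, I.Q i u₀ + lam • gradient V (u₀ i) = 0) := by
    constructor
    · intro i
      have : u₀ i - a i = wfix.1 i := by rw [hu₀, hcfg]; exact add_sub_cancel_left _ _
      rw [this]
      exact (BoundedContinuousFunction.norm_coe_le_norm wfix.1 i).trans ((hmem _).1 wfix.2)
    · exact (heqv wfix).1 hfix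
  have huniq : ∀ u : Config r d,
      ((∀ i : ZLat r, ‖u i - a i‖ ≤ ε) ∧
        (∀ i : ZLat r, I.Q i u + lam • gradient V (u i) = 0)) → u = u₀ := by
    intro u hu
    set wu : E := BoundedContinuousFunction.ofNormedAddCommGroupDiscrete
      (fun i => u i - a i) ε hu.1 with hwu
    have hwumem : wu ∈ X := (hmem _).2 (hmkE_norm _ _)
    have hcfgwu : cfg wu = u := by
      funext j
      rw [hcfg]
      show a j + (u j - a j) = u j
      abel
    set wuX : X := ⟨wu, hwumem⟩ with hwuX
    have hfixu : Φ wuX = wuX := by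
      apply (heqv wuX).2
      intro i
      show I.Q i (cfg wu) + lam • gradient V (cfg wu i) = 0
      rw [hcfgwu]
      exact hu.2 i
    have : wuX = wfix := hcontr.fixedPoint_unique hfixu
    calc u = cfg wu := hcfgwu.symm
      _ = cfg wfix.1 := by rw [show wu = wfix.1 from congrArg Subtype.val this]
      _ = u₀ := rfl
  refine ⟨⟨u₀, hprop, huniq⟩, ?_⟩
  intro u hu
  refine ⟨ε + R, fun i => ?_⟩
  calc ‖u i - L (latCast i)‖ = ‖(u i - a i) + (a i - L (latCast i))‖ := by rw [sub_add_sub_cancel]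
    _ ≤ ‖u i - a i‖ + ‖a i - L (latCast i)‖ := norm_add_le _ _
    _ ≤ ε + R := add_le_add (hu.1 i) (haR i)
end
end

section
/- Let Λ ⊆ ℝ^d be a repetitive Delone set of finite local complexity, let V : ℝ^d → ℝ be a bounded C³ Λ-equivariant non-degenerate function admitting a uniform local inverse family with constants R_V, K_V, let L : ℝ^r → ℝ^d be a linear map, R > 0, ε > 0, and let (𝒮, (H_B)) be an interaction satisfying condition (H2). Then there exist λ_* > 0 and ε' > 0 such that for every λ > λ_*, every a : ℤ^r → ℝ^d with a i ∈ Z_V and ‖a i - L i‖ ≤ R for all i, and every configuration u with sup_i ‖u i - a i‖ ≤ ε, one has ‖Q_i(u)‖/λ ≤ R_V (so that K_{a i}(-Q_i(u)/λ) is defined) and ‖K_{a i}(-Q_i(u)/λ) - a i‖ ≤ ε' for all i ∈ ℤ^r. -/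
open Metric Set

noncomputable section

/-- Lemma: the anti-integrable-limit map is well defined for λ large. -/
theorem antiIntegrable_map_wellDefined {d r : ℕ}
    (Λ : Set (Euc d)) (hDel : IsDeloneSet Λ) (hRep : IsRepetitive Λ) (hFLC : HasFLC Λ)
    (V : Euc d → ℝ) (hV : BoundedC3 V) (hVeq : IsPatternEquivariant Λ V)
    (hVnd : NonDegeneratePotential V)
    (K : Euc d → Euc d → Euc d) (RV KV : ℝ) (hK : UnifLocalInv V K RV KV)
    (L : EuclideanSpace ℝ (Fin r) →ₗ[ℝ] Euc d) (R : ℝ) (hR : 0 < R) (ε : ℝ) (hε : 0 < ε)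
    (I : Interaction r d) (hC2 : I.IsC2) (hH2 : I.SatisfiesH2) :
    ∃ lams > (0 : ℝ), ∃ ε' > (0 : ℝ), ∀ lam : ℝ, lam > lams →
      ∀ a : Config r d, (∀ i : ZLat r, a i ∈ ZSet V ∧ ‖a i - L (latCast i)‖ ≤ R) →
        ∀ u : Config r d, (∀ i : ZLat r, ‖u i - a i‖ ≤ ε) →
          ∀ i : ZLat r,
            ‖I.Q i u‖ / lam ≤ RV ∧
            ‖K (a i) (-((1 / lam) • I.Q i u)) - a i‖ ≤ ε' := by
  obtain ⟨C, hC⟩ := hH2 L (R + ε) (by linarith)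
  obtain ⟨hRV, hKV, hKz⟩ := hK
  have hC0 : 0 ≤ C := by
    have h1 := hC (fun i => L (latCast i)) (fun i => by simp; linarith) 0
    have h2 : (0:ℝ) ≤ ‖I.Q 0 (fun i => L (latCast i))‖ +
        ‖I.HessF 0 (fun i => L (latCast i))‖ := by positivity
    linarith
  refine ⟨C / RV + 1, by positivity, KV * RV, by positivity, ?_⟩
  intro lam hlam a ha u hu i
  have hlam0 : 0 < lam := by
    have : (0:ℝ) < C / RV + 1 := by positivity
    linarith
  have hu' : OfTypeR L (R + ε) u := by
    intro j
    calc ‖u j - L (latCast j)‖ ≤ ‖u j - a j‖ + ‖a j - L (latCast j)‖ := by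
          simpa using norm_sub_le_norm_sub_add_norm_sub (u j) (a j) (L (latCast j))
      _ ≤ ε + R := add_le_add (hu j) (ha j).2
      _ = R + ε := by ring
  have hQ : ‖I.Q i u‖ ≤ C := by
    have h5 := hC u hu' i
    have h6 := norm_nonneg (I.HessF i u)
    linarith
  have hQlam : ‖I.Q i u‖ / lam ≤ RV := by
    rw [div_le_iff₀ hlam0]
    have h3 : C / RV < lam := by linarith
    have h4 : C < lam * RV := by
      have := (div_lt_iff₀ hRV).mp h3
      linarith
    linarith
  refine ⟨hQlam, ?_⟩
  set x : Euc d := -((1 / lam) • I.Q i u) with hxdef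
  have hx : ‖x‖ ≤ RV := by
    rw [hxdef, norm_neg, norm_smul, norm_div, norm_one]
    rw [Real.norm_eq_abs, abs_of_pos hlam0]
    calc 1 / lam * ‖I.Q i u‖ = ‖I.Q i u‖ / lam := by ring
      _ ≤ RV := hQlam
  obtain ⟨hdiff, hgrad, hK0, hbound⟩ := hKz (a i) (ha i).1
  have hmem : x ∈ closedBall (0 : Euc d) RV := by
    simpa [mem_closedBall, dist_zero_right] using hx
  have hmv := (convex_closedBall (0 : Euc d) RV).norm_image_sub_le_of_norm_fderivWithin_le
    (hdiff.differentiableOn one_ne_zero) hbound (mem_closedBall_self hRV.le) hmem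
  rw [hK0, sub_zero] at hmv
  calc ‖K (a i) x - a i‖ ≤ KV * ‖x‖ := hmv
    _ ≤ KV * RV := mul_le_mul_of_nonneg_left hx hKV.le
end
end

section
/- Let Λ ⊆ ℝ^d be a repetitive Delone set of finite local complexity, let V : ℝ^d → ℝ be a bounded C³ Λ-equivariant non-degenerate function admitting a uniform local inverse family with constants R_V, K_V, let A ∈ GL(d,ℝ) be expanding with constant μ > 1, let L : ℝ^r → ℝ^d be a linear map, R > 0, ε > 0, and let (𝒮, (H_B)) be an interaction satisfying condition (H2). Then there exist N ∈ ℕ and ε' > 0 such that for every integer n ≥ N, every a : ℤ^r → ℝ^d with A^n (a i) ∈ Z_V and ‖a i - L i‖ ≤ R for all i, and every configuration u with sup_i ‖u i - a i‖ ≤ ε, one has ‖((A^n)ᵀ)^{-1} Q_i(u)‖ ≤ R_V (so that K_{A^n (a i)}(-((A^n)ᵀ)^{-1} Q_i(u)) is defined) and ‖A^{-n} K_{A^n (a i)}(-((A^n)ᵀ)^{-1} Q_i(u)) - a i‖ ≤ ε' for all i ∈ ℤ^r. -/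
open Metric Set

noncomputable section

/-- Lemma: the anti-integrable-limit map in the self-affine case is well defined
for n large. -/
theorem antiIntegrable_map_wellDefined_selfAffine {d r : ℕ}
    (Λ : Set (Euc d)) (hDel : IsDeloneSet Λ) (hRep : IsRepetitive Λ) (hFLC : HasFLC Λ)
    (V : Euc d → ℝ) (hV : BoundedC3 V) (hVeq : IsPatternEquivariant Λ V)
    (hVnd : NonDegeneratePotential V)
    (K : Euc d → Euc d → Euc d) (RV KV : ℝ) (hK : UnifLocalInv V K RV KV)
    (A : Euc d ≃L[ℝ] Euc d) (μ : ℝ) (hA : Expanding A μ)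
    (L : EuclideanSpace ℝ (Fin r) →ₗ[ℝ] Euc d) (R : ℝ) (hR : 0 < R) (ε : ℝ) (hε : 0 < ε)
    (I : Interaction r d) (hC2 : I.IsC2) (hH2 : I.SatisfiesH2) :
    ∃ N : ℕ, ∃ ε' > (0 : ℝ), ∀ n : ℕ, n ≥ N →
      ∀ a : Config r d,
        (∀ i : ZLat r, (A ^ n) (a i) ∈ ZSet V ∧ ‖a i - L (latCast i)‖ ≤ R) →
        ∀ u : Config r d, (∀ i : ZLat r, ‖u i - a i‖ ≤ ε) →
          ∀ i : ZLat r,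
            ‖ContinuousLinearMap.adjoint
                (((A ^ n).symm : Euc d ≃L[ℝ] Euc d) : Euc d →L[ℝ] Euc d) (I.Q i u)‖ ≤ RV ∧
            ‖(A ^ n).symm (K ((A ^ n) (a i))
                (-(ContinuousLinearMap.adjoint
                    (((A ^ n).symm : Euc d ≃L[ℝ] Euc d) : Euc d →L[ℝ] Euc d) (I.Q i u))))
              - a i‖ ≤ ε' := by
  classical
  obtain ⟨hμ1, hAexp⟩ := hA
  obtain ⟨hRV, hKV, hKz⟩ := hK
  have hμ0 : (0:ℝ) < μ := lt_trans one_pos hμ1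
  obtain ⟨C, hC⟩ := hH2 L (R + ε) (by linarith)
  set c : ℝ := max C 1 with hc_def
  have hc : (0:ℝ) < c := lt_of_lt_of_le one_pos (le_max_right _ _)
  have hinv : μ⁻¹ < 1 := by
    rw [inv_lt_one_iff₀]; right; exact hμ1
  have hinvnn : (0:ℝ) ≤ μ⁻¹ := by positivity
  obtain ⟨N, hN⟩ := exists_pow_lt_of_lt_one (div_pos hRV hc) hinv
  -- bound on the inverse powers
  have h1 : ∀ z : Euc d, ‖A.symm z‖ ≤ μ⁻¹ * ‖z‖ := by
    intro z
    have h := hAexp (A.symm z)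
    rw [A.apply_symm_apply] at h
    rw [inv_mul_eq_div, le_div_iff₀ hμ0, mul_comm]
    exact h
  have hsymm : ∀ n : ℕ, ∀ y : Euc d, ‖(A ^ n).symm y‖ ≤ μ⁻¹ ^ n * ‖y‖ := by
    intro n
    induction n with
    | zero => intro y; show ‖(ContinuousLinearEquiv.refl ℝ _).symm y‖ ≤ _; simp
    | succ n ih =>
      intro y
      have e : (A ^ (n+1)).symm y = (A ^ n).symm (A.symm y) := by
        rw [pow_succ']; rfl
      rw [e]
      calc ‖(A ^ n).symm (A.symm y)‖ ≤ μ⁻¹ ^ n * ‖A.symm y‖ := ih _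
        _ ≤ μ⁻¹ ^ n * (μ⁻¹ * ‖y‖) :=
            mul_le_mul_of_nonneg_left (h1 y) (by positivity)
        _ = μ⁻¹ ^ (n+1) * ‖y‖ := by ring
  refine ⟨N, KV * RV + 1, by positivity, ?_⟩
  intro n hn a ha u hu i
  -- bound on Q
  have hu' : OfTypeR L (R + ε) u := by
    intro j
    calc ‖u j - L (latCast j)‖ = ‖(u j - a j) + (a j - L (latCast j))‖ := by abel_nf
      _ ≤ ‖u j - a j‖ + ‖a j - L (latCast j)‖ := norm_add_le _ _
      _ ≤ ε + R := add_le_add (hu j) (ha j).2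
      _ = R + ε := by ring
  have hQ : ‖I.Q i u‖ ≤ c := by
    have h := hC u hu' i
    have h2 := norm_nonneg (I.HessF i u)
    have := le_max_left C 1
    simp only [hc_def]
    linarith
  -- bound on the adjoint applied to Q
  have hpown : μ⁻¹ ^ n ≤ μ⁻¹ ^ N := pow_le_pow_of_le_one hinvnn hinv.le hn
  have hpow1 : μ⁻¹ ^ n ≤ 1 := (hpown.trans (pow_le_one₀ hinvnn hinv.le))
  have hpow : μ⁻¹ ^ n * c ≤ RV := by
    have : μ⁻¹ ^ n * c ≤ (RV / c) * c :=
      mul_le_mul_of_nonneg_right (hpown.trans hN.le) hc.le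
    rwa [div_mul_cancel₀ _ (ne_of_gt hc)] at this
  set T : Euc d →L[ℝ] Euc d :=
    (((A ^ n).symm : Euc d ≃L[ℝ] Euc d) : Euc d →L[ℝ] Euc d) with hT
  have hTnorm : ‖T‖ ≤ μ⁻¹ ^ n := by
    apply ContinuousLinearMap.opNorm_le_bound _ (by positivity)
    intro y
    exact hsymm n y
  have hadjnorm : ‖ContinuousLinearMap.adjoint T‖ = ‖T‖ :=
    LinearIsometryEquiv.norm_map ContinuousLinearMap.adjoint T
  have hTQ : ‖ContinuousLinearMap.adjoint T (I.Q i u)‖ ≤ RV := by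
    calc ‖ContinuousLinearMap.adjoint T (I.Q i u)‖
        ≤ ‖ContinuousLinearMap.adjoint T‖ * ‖I.Q i u‖ :=
          ContinuousLinearMap.le_opNorm _ _
      _ ≤ μ⁻¹ ^ n * c := by
          rw [hadjnorm]
          exact mul_le_mul hTnorm hQ (norm_nonneg _) (by positivity)
      _ ≤ RV := hpow
  refine ⟨hTQ, ?_⟩
  set z := (A ^ n) (a i) with hz
  obtain ⟨hzcd, hzgrad, hz0, hzder⟩ := hKz z (ha i).1
  set ξ : Euc d := -(ContinuousLinearMap.adjoint T (I.Q i u)) with hξdef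
  have hξ : ξ ∈ closedBall (0 : Euc d) RV := by
    rw [mem_closedBall, dist_zero_right, hξdef, norm_neg]
    exact hTQ
  have hmean : ‖K z ξ - K z 0‖ ≤ KV * ‖ξ - 0‖ :=
    (convex_closedBall (0 : Euc d) RV).norm_image_sub_le_of_norm_fderivWithin_le
      (hzcd.differentiableOn one_ne_zero) hzder (mem_closedBall_self hRV.le) hξ
  have hKzb : ‖K z ξ - z‖ ≤ KV * RV := by
    have e0 : ‖K z ξ - z‖ = ‖K z ξ - K z 0‖ := by rw [hz0]
    rw [e0]
    calc ‖K z ξ - K z 0‖ ≤ KV * ‖ξ - 0‖ := hmean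
      _ = KV * ‖ξ‖ := by rw [sub_zero]
      _ ≤ KV * RV := by
          apply mul_le_mul_of_nonneg_left _ hKV.le
          rw [hξdef, norm_neg]; exact hTQ
  have e : (A ^ n).symm (K z ξ) - a i = (A ^ n).symm (K z ξ - z) := by
    rw [map_sub, hz, ContinuousLinearEquiv.symm_apply_apply]
  calc ‖(A ^ n).symm (K z ξ) - a i‖ = ‖(A ^ n).symm (K z ξ - z)‖ := by rw [e]
    _ ≤ μ⁻¹ ^ n * ‖K z ξ - z‖ := hsymm n _
    _ ≤ 1 * (KV * RV) := mul_le_mul hpow1 hKzb (norm_nonneg _) one_pos.le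
    _ ≤ KV * RV + 1 := by linarith
end
end
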